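/- Let r ≥ 1 be a natural number, let c_1, …, c_r > 0 be constants, and let α_1, …, α_r : ℝ → ℝ be locally Lipschitz extended class K functions. Let t₀ < t_f and let z_0, …, z_{r-1} : ℝ → ℝ be continuously differentiable on [t₀, t_f) satisfying z_j(t) = z_{j-1}'(t) + c_j · α_j(z_{j-1}(t)) for all j = 1, …, r-1 and all t ∈ [t₀, t_f). Suppose that for every t ∈ [t₀, t_f) with z_0(t) > 0, z_1(t) > 0, …, z_{r-1}(t) > 0, one has z_{r-1}'(t) ≥ -c_r · α_r(z_{r-1}(t)). If z_j(t₀) > 0 for all j = 0, …, r-1, then z_j(t) > 0 for all j = 0, …, r-1 and all t ∈ [t₀, t_f). -/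

import Mathlib

open Set Filter Topology

lemma endpoint_pos (c : ℝ) (hc : 0 < c) (α : ℝ → ℝ) (hL : LocallyLipschitz α) (h0 : α 0 = 0)
    (f f' : ℝ → ℝ) (a b : ℝ) (hab : a < b)
    (hcont : ContinuousOn f (Icc a b))
    (hderiv : ∀ t ∈ Ioo a b, HasDerivAt f (f' t) t)
    (hineq : ∀ t ∈ Ioo a b, -c * α (f t) ≤ f' t)
    (hpos : ∀ t ∈ Ico a b, 0 < f t) :
    0 < f b := by
  by_contra hcon
  push_neg at hcon
  -- f b = 0
  have hb : b ∈ Icc a b := ⟨hab.le, le_rfl⟩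
  have hne : (𝓝[Ico a b] b).NeBot := by
    rw [← mem_closure_iff_nhdsWithin_neBot, closure_Ico hab.ne]
    exact hb
  have htend : Filter.Tendsto f (𝓝[Ico a b] b) (𝓝 (f b)) :=
    (hcont b hb).mono_left (nhdsWithin_mono _ Ico_subset_Icc_self)
  have hfb_nonneg : 0 ≤ f b :=
    ge_of_tendsto htend (Filter.eventually_inf_principal.2
      (Filter.Eventually.of_forall fun t ht => (hpos t ht).le))
  have hfb : f b = 0 := le_antisymm hcon hfb_nonneg
  -- Lipschitz constant near 0
  obtain ⟨K, U, hU, hlip⟩ := hL 0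
  obtain ⟨ε, hε, hball⟩ := Metric.mem_nhds_iff.1 hU
  have hαle : ∀ y : ℝ, 0 ≤ y → y < ε → α y ≤ K * y := by
    intro y hy hyε
    have hyU : y ∈ U := hball (by simpa [Real.dist_eq, abs_of_nonneg hy] using hyε)
    have h0U : (0 : ℝ) ∈ U := hball (by simpa using hε)
    have := hlip.dist_le_mul y hyU 0 h0U
    rw [Real.dist_eq, Real.dist_eq, h0, sub_zero, sub_zero, abs_of_nonneg hy] at this
    exact (le_abs_self _).trans this
  -- pick σ close to b with f small on [σ, b]
  have hcb : ContinuousWithinAt f (Icc a b) b := hcont b hb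
  obtain ⟨δ, hδ, hδf⟩ := Metric.continuousWithinAt_iff.1 hcb ε hε
  set σ : ℝ := max a (b - δ / 2) with hσdef
  have hσa : a ≤ σ := le_max_left _ _
  have hσb : σ < b := max_lt hab (by linarith)
  have hsmall : ∀ t ∈ Icc σ b, f t < ε := by
    intro t ⟨h1, h2⟩
    have ht : t ∈ Icc a b := ⟨hσa.trans h1, h2⟩
    have : dist t b < δ := by
      rw [Real.dist_eq, abs_of_nonpos (by linarith)]
      have : b - δ / 2 ≤ t := (le_max_right _ _).trans h1
      linarith
    have := hδf ht this
    rw [Real.dist_eq, hfb, sub_zero] at this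
    exact (le_abs_self _).trans_lt this
  -- monotonicity of g
  set g : ℝ → ℝ := fun t => f t * Real.exp (c * K * t) with hg
  have hmono : MonotoneOn g (Icc σ b) := by
    apply monotoneOn_of_hasDerivWithinAt_nonneg (convex_Icc σ b)
      (f' := fun t => f' t * Real.exp (c * K * t) + f t * (c * K * Real.exp (c * K * t)))
    · exact (hcont.mono (Icc_subset_Icc hσa le_rfl)).mul (Real.continuous_exp.comp
        (continuous_const.mul continuous_id)).continuousOn
    · intro t ht
      rw [interior_Icc] at ht
      have ht' : t ∈ Ioo a b := ⟨hσa.trans_lt ht.1, ht.2⟩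
      have hft : HasDerivAt f (f' t) t := hderiv t ht'
      have hexp : HasDerivAt (fun t => Real.exp (c * K * t)) (c * K * Real.exp (c * K * t)) t := by
        have h1 : HasDerivAt (fun t : ℝ => c * K * t) (c * K) t := by
          simpa using (hasDerivAt_id t).const_mul (c * (K : ℝ))
        have := h1.exp
        convert this using 1
        ring
      exact ((hft.mul hexp).congr_deriv (by ring)).hasDerivWithinAt
    · intro t ht
      rw [interior_Icc] at ht
      have ht' : t ∈ Ioo a b := ⟨hσa.trans_lt ht.1, ht.2⟩
      have hftpos : 0 < f t := hpos t ⟨(hσa.trans_lt ht.1).le, ht.2⟩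
      have hftε : f t < ε := hsmall t ⟨ht.1.le, ht.2.le⟩
      have h1 : α (f t) ≤ K * f t := hαle _ hftpos.le hftε
      have h2 : -c * α (f t) ≤ f' t := hineq t ht'
      have hexp : (0 : ℝ) < Real.exp (c * K * t) := Real.exp_pos _
      nlinarith [mul_le_mul_of_nonneg_left h1 hc.le]
  have hσm : σ ∈ Icc σ b := ⟨le_rfl, hσb.le⟩
  have := hmono hσm ⟨hσb.le, le_rfl⟩ hσb.le
  have hgσ : 0 < f σ * Real.exp (c * K * σ) := mul_pos (hpos σ ⟨hσa, hσb⟩) (Real.exp_pos _)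
  simp only [hg, hfb, zero_mul] at this
  linarith

/-- Scalar chain version of Proposition 1: if `z_j = z_{j-1}' + c_j α_j (z_{j-1})` for
`j = 1,…,r-1` on `[t₀, t_f)`, the `α_j` are locally Lipschitz extended class K functions,
and `z_{r-1}' ≥ -c_r α_r (z_{r-1})` holds whenever all `z_j` are positive, then positivity
of all `z_j` at `t₀` propagates to all of `[t₀, t_f)`. -/
theorem hocbf_scalar_chain_positivity (r : ℕ) (hr : 1 ≤ r)
    (c : ℕ → ℝ) (hc : ∀ j : ℕ, 1 ≤ j → j ≤ r → 0 < c j)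
    (α : ℕ → ℝ → ℝ)
    (hα : ∀ j : ℕ, 1 ≤ j → j ≤ r →
      LocallyLipschitz (α j) ∧ StrictMono (α j) ∧ α j 0 = 0)
    (t₀ t_f : ℝ) (ht : t₀ < t_f)
    (z : ℕ → ℝ → ℝ)
    (hz : ∀ j ≤ r - 1, ContDiffOn ℝ 1 (z j) (Set.Ico t₀ t_f))
    (hrec : ∀ j : ℕ, 1 ≤ j → j ≤ r - 1 → ∀ t ∈ Set.Ico t₀ t_f,
      z j t = derivWithin (z (j - 1)) (Set.Ico t₀ t_f) t + c j * α j (z (j - 1) t))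
    (hbar : ∀ t ∈ Set.Ico t₀ t_f, (∀ j ≤ r - 1, 0 < z j t) →
      derivWithin (z (r - 1)) (Set.Ico t₀ t_f) t ≥ -c r * α r (z (r - 1) t))
    (hinit : ∀ j ≤ r - 1, 0 < z j t₀) :
    ∀ t ∈ Set.Ico t₀ t_f, ∀ j ≤ r - 1, 0 < z j t := by
  intro t1 ht1
  by_contra hcon
  push_neg at hcon
  set n := r - 1 with hn
  -- the set of "bad" times in [t₀, t1]
  set S : Set ℝ := {t | t ∈ Icc t₀ t1 ∧ ∃ j ≤ n, z j t ≤ 0} with hS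
  have ht1f : t1 < t_f := ht1.2
  have hIccsub : Icc t₀ t1 ⊆ Ico t₀ t_f := fun x hx => ⟨hx.1, lt_of_le_of_lt hx.2 ht1f⟩
  have hSne : S.Nonempty := by
    obtain ⟨j, hj, hjle⟩ := hcon
    exact ⟨t1, ⟨⟨ht1.1, le_rfl⟩, j, hj, hjle⟩⟩
  have hSclosed : IsClosed S := by
    have : S = ⋃ j ∈ Finset.range (n + 1), {t | t ∈ Icc t₀ t1 ∧ z j t ≤ 0} := by
      ext t
      simp only [hS, mem_setOf_eq, mem_iUnion, Finset.mem_range, exists_prop]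
      constructor
      · rintro ⟨htm, j, hj, hjle⟩; exact ⟨j, by omega, htm, hjle⟩
      · rintro ⟨j, hj, htm, hjle⟩; exact ⟨htm, j, by omega, hjle⟩
    rw [this]
    apply isClosed_biUnion_finset
    intro j hj
    rw [Finset.mem_range] at hj
    have hjn : j ≤ n := by omega
    have hcontj : ContinuousOn (z j) (Icc t₀ t1) :=
      ((hz j hjn).continuousOn).mono hIccsub
    have := hcontj.preimage_isClosed_of_isClosed isClosed_Icc (isClosed_Iic (a := (0:ℝ)))
    exact this
  have hSbdd : BddBelow S := ⟨t₀, fun x hx => hx.1.1⟩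
  set T : ℝ := sInf S with hT
  have hTS : T ∈ S := hSclosed.csInf_mem hSne hSbdd
  obtain ⟨⟨hTt₀, hTt1⟩, k, hk, hkle⟩ := hTS
  have hTne : t₀ ≠ T := by
    intro h
    rw [← h] at hkle
    exact absurd (hinit k hk) (not_lt.2 hkle)
  have hTlt : t₀ < T := lt_of_le_of_ne hTt₀ hTne
  have hTf : T < t_f := lt_of_le_of_lt hTt1 ht1f
  -- positivity before T
  have hposbefore : ∀ t ∈ Ico t₀ T, ∀ j ≤ n, 0 < z j t := by
    intro t htm j hj
    by_contra hle
    push_neg at hle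
    have : t ∈ S := ⟨⟨htm.1, le_trans htm.2.le hTt1⟩, j, hj, hle⟩
    exact absurd (csInf_le hSbdd this) (not_le.2 htm.2)
  -- derivatives as honest derivatives on the interior
  have hderivj : ∀ j ≤ n, ∀ t ∈ Ioo t₀ T,
      HasDerivAt (z j) (derivWithin (z j) (Ico t₀ t_f) t) t := by
    intro j hj t htm
    have htmem : Ico t₀ t_f ∈ 𝓝 t :=
      mem_nhds_iff.2 ⟨Ioo t₀ t_f, Ioo_subset_Ico_self, isOpen_Ioo,
        ⟨htm.1, lt_trans htm.2 hTf⟩⟩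
    have hdw : DifferentiableWithinAt ℝ (z j) (Ico t₀ t_f) t :=
      ((hz j hj).differentiableOn one_ne_zero) t ⟨htm.1.le, lt_trans htm.2 hTf⟩
    have hda : DifferentiableAt ℝ (z j) t := hdw.differentiableAt htmem
    rw [derivWithin_of_mem_nhds htmem]
    exact hda.hasDerivAt
  -- each z j is positive at T via the key lemma
  have hposT : ∀ j ≤ n, 0 < z j T := by
    intro j hj
    rcases eq_or_lt_of_le hj with hjeq | hjlt
    · -- j = n : use the barrier hypothesis
      subst hjeq
      refine endpoint_pos (c r) (hc r hr le_rfl) (α r) (hα r hr le_rfl).1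
        (hα r hr le_rfl).2.2 (z n) (fun t => derivWithin (z n) (Ico t₀ t_f) t)
        t₀ T hTlt ?_ (hderivj n le_rfl) ?_ (fun t htm => hposbefore t htm n le_rfl)
      · exact ((hz n le_rfl).continuousOn).mono
          (fun x hx => ⟨hx.1, lt_of_le_of_lt hx.2 hTf⟩)
      · intro t htm
        have htf : t ∈ Ico t₀ t_f := ⟨htm.1.le, lt_trans htm.2 hTf⟩
        exact hbar t htf (fun i hi => hposbefore t ⟨htm.1.le, htm.2⟩ i hi)
    · -- j < n : use the recursion
      have hj1 : 1 ≤ j + 1 := le_add_self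
      have hj1n : j + 1 ≤ r - 1 := by omega
      have hj1r : j + 1 ≤ r := by omega
      refine endpoint_pos (c (j+1)) (hc (j+1) hj1 hj1r) (α (j+1)) (hα (j+1) hj1 hj1r).1
        (hα (j+1) hj1 hj1r).2.2 (z j) (fun t => derivWithin (z j) (Ico t₀ t_f) t)
        t₀ T hTlt ?_ (hderivj j hj) ?_ (fun t htm => hposbefore t htm j hj)
      · exact ((hz j hj).continuousOn).mono
          (fun x hx => ⟨hx.1, lt_of_le_of_lt hx.2 hTf⟩)
      · intro t htm
        have htf : t ∈ Ico t₀ t_f := ⟨htm.1.le, lt_trans htm.2 hTf⟩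
        have hrec' := hrec (j+1) hj1 hj1n t htf
        simp only [Nat.add_sub_cancel] at hrec'
        have hz1pos : 0 < z (j+1) t := hposbefore t ⟨htm.1.le, htm.2⟩ (j+1) hj1n
        linarith [hrec']
  exact absurd (hposT k hk) (not_lt.2 hkle)
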